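/- Let n > 1 be an integer, let u be an integer with gcd(u, n) = 1, and let a, b be positive integers each dividing n. Then the elements α and β of B(ℤ_n) defined by α(x) = u·x + a and β(x) = u·x + b are conjugate in the group B(ℤ_n) if and only if gcd(u - 1, a) = gcd(u - 1, b). -/

import Mathlib

open Polynomial

/-- The group `B_x(R)` of `R`-automorphisms of `R[x]` of basic form
`x ↦ u·x + a` with `u` a unit of `R` and `a ∈ R`. -/
def Bx (R : Type*) [CommRing R] : Subgroup (R[X] ≃ₐ[R] R[X]) where
  carrier := {σ | ∃ u : Rˣ, ∃ a : R, σ X = C (u : R) * X + C a}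
  one_mem' := ⟨1, 0, by simp⟩
  mul_mem' := by
    rintro σ τ ⟨u, a, hu⟩ ⟨v, b, hv⟩
    refine ⟨u * v, (v : R) * a + b, ?_⟩
    show σ (τ X) = _
    rw [hv, map_add, map_mul, ← Polynomial.algebraMap_eq, AlgEquiv.commutes,
      AlgEquiv.commutes, Polynomial.algebraMap_eq, hu]
    push_cast
    simp only [C_mul, C_add]
    ring
  inv_mem' := by
    rintro σ ⟨u, a, hu⟩
    refine ⟨u⁻¹, -(((u⁻¹ : Rˣ) : R) * a), ?_⟩
    show σ.symm X = _
    have h : σ.symm (σ X) = X := σ.symm_apply_apply X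
    rw [hu, map_add, map_mul, ← Polynomial.algebraMap_eq, AlgEquiv.commutes,
      AlgEquiv.commutes, Polynomial.algebraMap_eq] at h
    have key : C ((u⁻¹ : Rˣ) : R) * C ((u : Rˣ) : R) = 1 := by
      rw [← C_mul]; simp
    rw [C_neg, C_mul]
    linear_combination C ((u⁻¹ : Rˣ) : R) * h - σ.symm X * key

theorem algEquiv_ext {R : Type*} [CommRing R] {σ τ : R[X] ≃ₐ[R] R[X]}
    (h : σ X = τ X) : σ = τ := by
  have := Polynomial.algHom_ext (f := (σ : R[X] →ₐ[R] R[X])) (g := (τ : R[X] →ₐ[R] R[X])) h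
  exact AlgEquiv.coe_algHom_injective this

noncomputable def affineEquiv {R : Type*} [CommRing R] (v : Rˣ) (c : R) :
    R[X] ≃ₐ[R] R[X] :=
  AlgEquiv.ofAlgHom (aeval (C (v : R) * X + C c))
    (aeval (C ((v⁻¹ : Rˣ) : R) * X - C (((v⁻¹ : Rˣ) : R) * c)))
    (by
      refine Polynomial.algHom_ext ?_
      have hv : ((v⁻¹ : Rˣ) : R) * (v : R) = 1 := by
        rw [← Units.val_mul]; simp
      simp only [map_sub, map_add, map_mul, aeval_C, aeval_X, AlgHom.coe_comp,
        Function.comp_apply, AlgHom.coe_id, id_eq, Polynomial.algebraMap_eq]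
      have h2 : C ((v⁻¹ : Rˣ) : R) * C ((v : Rˣ) : R) = 1 := by
        rw [← C_mul, hv]; simp
      linear_combination X * h2)
    (by
      refine Polynomial.algHom_ext ?_
      have hv : ((v:R)) * ((v⁻¹ : Rˣ) : R) = 1 := by
        rw [← Units.val_mul]; simp
      simp only [map_sub, map_add, map_mul, aeval_C, aeval_X, AlgHom.coe_comp,
        Function.comp_apply, AlgHom.coe_id, id_eq, Polynomial.algebraMap_eq]
      have h2 : C ((v : Rˣ) : R) * C ((v⁻¹ : Rˣ) : R) = 1 := by
        rw [← C_mul, hv]; simp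
      linear_combination (X - C c) * h2)

theorem affineEquiv_X {R : Type*} [CommRing R] (v : Rˣ) (c : R) :
    (affineEquiv v c) X = C (v : R) * X + C c := by
  show (aeval (C (v : R) * X + C c)) X = _
  simp

theorem algEquiv_C {R : Type*} [CommRing R] (σ : R[X] ≃ₐ[R] R[X]) (r : R) :
    σ (C r) = C r := by
  rw [← Polynomial.algebraMap_eq, AlgEquiv.commutes]

theorem exists_conjugator (n : ℕ) (hn : 1 < n) (u : ℤ) (a b : ℕ)
    (ha : 0 < a) (hb : 0 < b) (han : a ∣ n)
    (hgcd : Int.gcd (u - 1) a = Int.gcd (u - 1) b) :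
    ∃ w c : ℤ, IsUnit ((w : ZMod n)) ∧ (n : ℤ) ∣ w * a + c * (u - 1) - b := by
  haveI : NeZero n := ⟨by omega⟩
  set d : ℕ := Int.gcd (u - 1) (a : ℤ) with hd
  have hd0 : 0 < d := by
    rw [hd, Int.gcd_pos_iff]
    right; exact_mod_cast ha.ne'
  obtain ⟨e, he⟩ : (d : ℤ) ∣ (u - 1) := Int.gcd_dvd_left _ _
  obtain ⟨a', ha'⟩ : (d : ℤ) ∣ (a : ℤ) := Int.gcd_dvd_right _ _
  obtain ⟨b', hb'⟩ : (d : ℤ) ∣ (b : ℤ) := hgcd ▸ Int.gcd_dvd_right _ _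
  have hea' : Int.gcd e a' = 1 := by
    have h1 : d * Int.gcd e a' = d * 1 := by
      calc d * Int.gcd e a' = ((d:ℤ)).natAbs * Int.gcd e a' := by simp
        _ = Int.gcd ((d:ℤ) * e) ((d:ℤ) * a') := (Int.gcd_mul_left _ _ _).symm
        _ = Int.gcd (u - 1) (a : ℤ) := by rw [← he, ← ha']
        _ = d * 1 := by rw [← hd, mul_one]
    exact Nat.eq_of_mul_eq_mul_left hd0 h1
  have heb' : Int.gcd e b' = 1 := by
    have h1 : d * Int.gcd e b' = d * 1 := by
      calc d * Int.gcd e b' = ((d:ℤ)).natAbs * Int.gcd e b' := by simp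
        _ = Int.gcd ((d:ℤ) * e) ((d:ℤ) * b') := (Int.gcd_mul_left _ _ _).symm
        _ = Int.gcd (u - 1) (b : ℤ) := by rw [← he, ← hb']
        _ = d * 1 := by rw [← hgcd, mul_one]
    exact Nat.eq_of_mul_eq_mul_left hd0 h1
  -- Bezout for gcd a' e = 1
  have hae : Int.gcd a' e = 1 := by rw [Int.gcd_comm]; exact hea'
  have hxy : (1 : ℤ) = a' * Int.gcdA a' e + e * Int.gcdB a' e := by
    have := Int.gcd_eq_gcd_ab a' e
    rwa [hae] at this
  set x : ℤ := Int.gcdA a' e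
  set y : ℤ := Int.gcdB a' e
  set x0 : ℤ := x * b' with hx0
  set c0 : ℤ := y * b' with hc0
  have key1 : x0 * a + c0 * (u - 1) - b = 0 := by
    linear_combination (x * b') * ha' + (y * b') * he - hb' + (-((d:ℤ) * b')) * hxy
  have key1' : x0 * a' + c0 * e = b' := by
    linear_combination (-b') * hxy
  obtain ⟨N', hN'⟩ := han
  have hnZ : (n : ℤ) = (a : ℤ) * N' := by exact_mod_cast hN'
  set m : ℕ := Int.gcd e (N' : ℤ) with hm
  set m' : ℕ := Nat.gcd m n with hm'
  have hm'n : m' ∣ n := Nat.gcd_dvd_right _ _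
  have hm'pos : 0 < m' := Nat.gcd_pos_of_pos_right _ (by omega)
  haveI : NeZero m' := ⟨hm'pos.ne'⟩
  -- coprimality of x0 with m'
  have cop : Int.gcd x0 (m' : ℤ) = 1 := by
    set g : ℕ := Int.gcd x0 (m' : ℤ) with hg
    have hge : (g : ℤ) ∣ e := by
      have h1 : (g : ℤ) ∣ (m' : ℤ) := Int.gcd_dvd_right _ _
      have h2 : (m' : ℤ) ∣ (m : ℤ) := by exact_mod_cast Nat.gcd_dvd_left m n
      have h3 : (m : ℤ) ∣ e := Int.gcd_dvd_left _ _
      exact h1.trans (h2.trans h3)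
    have hgx : (g : ℤ) ∣ x0 := Int.gcd_dvd_left _ _
    have hgb' : (g : ℤ) ∣ b' := by
      rw [← key1']
      exact dvd_add (hgx.mul_right _) (hge.mul_left _)
    have : (g : ℤ) ∣ ((1 : ℕ) : ℤ) := by
      rw [← heb']
      exact Int.dvd_coe_gcd hge hgb'
    have : g ∣ 1 := by exact_mod_cast this
    simpa [hg] using Nat.dvd_one.mp this
  -- x0 is a unit mod m'
  have hx0unit : IsUnit ((x0 : ZMod m')) := by
    have h := Int.gcd_eq_gcd_ab x0 (m' : ℤ)
    rw [cop] at h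
    refine IsUnit.of_mul_eq_one ((Int.gcdA x0 (m':ℤ) : ZMod m')) ?_
    have h2 : ((x0 * Int.gcdA x0 (m':ℤ) + (m':ℤ) * Int.gcdB x0 (m':ℤ) : ℤ) : ZMod m') = ((1:ℤ) : ZMod m') := by
      rw [← h]; norm_num
    push_cast [ZMod.natCast_self] at h2
    rw [← h2]; ring
  obtain ⟨V, hV⟩ := ZMod.unitsMap_surjective hm'n hx0unit.unit
  set W : ℕ := ((V : ZMod n)).val with hW
  have hWV : ((W : ℕ) : ZMod n) = (V : ZMod n) := by
    rw [hW, ZMod.natCast_val, ZMod.cast_id]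
  have hWm' : ((W : ℕ) : ZMod m') = (x0 : ZMod m') := by
    have h1 : ZMod.castHom hm'n (ZMod m') (V : ZMod n) = (x0 : ZMod m') := by
      have := congrArg Units.val hV
      simpa [ZMod.unitsMap, IsUnit.unit_spec] using this
    rw [hW, ZMod.natCast_val, ← ZMod.castHom_apply (h := hm'n)]
    exact h1
  have hdvd : (m' : ℤ) ∣ ((W : ℤ) - x0) := by
    rw [← ZMod.intCast_zmod_eq_zero_iff_dvd]
    push_cast
    rw [hWm']
    ring
  obtain ⟨j, hj⟩ := hdvd
  have hPQ : ((m' : ℕ) : ℤ) = (m : ℤ) * Int.gcdA (m:ℤ) (n:ℤ) + (n : ℤ) * Int.gcdB (m:ℤ) (n:ℤ) := by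
    have h := Int.gcd_eq_gcd_ab (m : ℤ) (n : ℤ)
    rwa [Int.gcd_natCast_natCast, ← hm'] at h
  have hRS : ((m : ℕ) : ℤ) = e * Int.gcdA e (N':ℤ) + (N' : ℤ) * Int.gcdB e (N':ℤ) := by
    have h := Int.gcd_eq_gcd_ab e (N' : ℤ)
    rwa [← hm] at h
  set P : ℤ := Int.gcdA (m:ℤ) (n:ℤ)
  set Q : ℤ := Int.gcdB (m:ℤ) (n:ℤ)
  set Rc : ℤ := Int.gcdA e (N':ℤ)
  set Sc : ℤ := Int.gcdB e (N':ℤ)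
  set t : ℤ := j * P * Rc
  set s : ℤ := j * P * Sc
  set w : ℤ := x0 + t * e + s * N' with hw
  refine ⟨w, c0 - t * a', ?_, ?_⟩
  · have hwW : ((w : ℤ) : ZMod n) = ((W : ℕ) : ZMod n) := by
      have hdiff : (n : ℤ) ∣ (w - (W : ℤ)) := by
        refine ⟨-(j * Q), ?_⟩
        linear_combination (-1 : ℤ) * hj + (-j) * hPQ + (-(j*P)) * hRS
      have h0 : ((w - (W:ℤ) : ℤ) : ZMod n) = 0 := by
        rw [ZMod.intCast_zmod_eq_zero_iff_dvd]; exact hdiff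
      push_cast at h0 ⊢
      exact sub_eq_zero.mp h0
    rw [hwW, hWV]
    exact V.isUnit
  · refine ⟨s, ?_⟩
    linear_combination key1 + (t*e) * ha' + (-(t*a')) * he + (-s) * hnZ

theorem forward_dvd (n : ℕ) (hn : 1 < n) (u : ℤ) (a b : ℕ) (ha : 0 < a) (han : a ∣ n)
    (v cg : ZMod n) (hrel : ((b : ℕ) : ZMod n) = v * (a : ZMod n) + cg * (1 - (u : ZMod n))) :
    Int.gcd (u - 1) a ∣ b := by
  set d : ℕ := Int.gcd (u - 1) (a : ℤ) with hd
  have hd0 : 0 < d := by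
    rw [hd, Int.gcd_pos_iff]; right; exact_mod_cast ha.ne'
  haveI : NeZero d := ⟨hd0.ne'⟩
  have hda : d ∣ a := by
    have : (d : ℤ) ∣ (a : ℤ) := Int.gcd_dvd_right _ _
    exact_mod_cast this
  have hdn : d ∣ n := hda.trans han
  have h2 := congrArg (ZMod.castHom hdn (ZMod d)) hrel
  simp only [map_add, map_mul, map_sub, map_one, map_natCast, map_intCast] at h2
  have hA : ((a : ℕ) : ZMod d) = 0 := (ZMod.natCast_eq_zero_iff a d).mpr hda
  have hU : ((u : ℤ) : ZMod d) = 1 := by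
    have h3 : ((u - 1 : ℤ) : ZMod d) = 0 :=
      (ZMod.intCast_zmod_eq_zero_iff_dvd _ d).mpr (Int.gcd_dvd_left _ _)
    push_cast at h3
    linear_combination h3
  rw [hA, hU] at h2
  simp at h2
  exact (ZMod.natCast_eq_zero_iff b d).mp h2

/-- Theorem: for `a, b` positive divisors of `n`, the elements `α(x) = u·x + a` and
`β(x) = u·x + b` of `B(ℤ_n)` are conjugate iff `gcd(u-1, a) = gcd(u-1, b)`. -/
theorem zmodn_conjugate_iff_gcd_sub_one_eq (n : ℕ) (hn : 1 < n) (u : ℤ)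
    (hu : Int.gcd u n = 1) (a b : ℕ) (ha : 0 < a) (hb : 0 < b)
    (han : a ∣ n) (hbn : b ∣ n)
    (α β : (ZMod n)[X] ≃ₐ[ZMod n] (ZMod n)[X])
    (hα : α X = C ((u : ZMod n)) * X + C ((a : ZMod n)))
    (hβ : β X = C ((u : ZMod n)) * X + C ((b : ZMod n))) :
    (∃ g ∈ Bx (ZMod n), β = g⁻¹ * α * g) ↔
      Int.gcd (u - 1) a = Int.gcd (u - 1) b := by

  constructor
  · rintro ⟨g, ⟨v, cg, hg⟩, hconj⟩
    have hmul : g * β = α * g := by rw [hconj]; group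
    have h1 : g (β X) = α (g X) := by
      rw [← AlgEquiv.mul_apply, ← AlgEquiv.mul_apply, hmul]
    rw [hβ, hg, map_add, map_mul, algEquiv_C, algEquiv_C, hg, map_add, map_mul,
      algEquiv_C, algEquiv_C, hα] at h1
    have h2 : ((u:ZMod n)) * cg + b = (v : ZMod n) * a + cg := by
      have := congrArg (Polynomial.eval 0) h1
      simpa using this
    have hrel1 : ((b : ℕ) : ZMod n) = (v : ZMod n) * a + cg * (1 - (u : ZMod n)) := by
      linear_combination h2
    have hvv : ((v⁻¹ : (ZMod n)ˣ) : ZMod n) * ((v : (ZMod n)ˣ) : ZMod n) = 1 := by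
      rw [← Units.val_mul]; simp
    have hrel2 : ((a : ℕ) : ZMod n) = ((v⁻¹ : (ZMod n)ˣ) : ZMod n) * b +
        (-(((v⁻¹ : (ZMod n)ˣ) : ZMod n) * cg)) * (1 - (u : ZMod n)) := by
      linear_combination (-((v⁻¹ : (ZMod n)ˣ) : ZMod n)) * hrel1 + (-((a:ℕ) : ZMod n)) * hvv
    have dvd1 : Int.gcd (u - 1) a ∣ b := forward_dvd n hn u a b ha han _ _ hrel1
    have dvd2 : Int.gcd (u - 1) b ∣ a := forward_dvd n hn u b a hb hbn _ _ hrel2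
    refine Nat.dvd_antisymm ?_ ?_
    · have : ((Int.gcd (u-1) a : ℕ) : ℤ) ∣ ((Int.gcd (u-1) b : ℕ) : ℤ) :=
        Int.dvd_coe_gcd (Int.gcd_dvd_left _ _) (by exact_mod_cast dvd1)
      exact_mod_cast this
    · have : ((Int.gcd (u-1) b : ℕ) : ℤ) ∣ ((Int.gcd (u-1) a : ℕ) : ℤ) :=
        Int.dvd_coe_gcd (Int.gcd_dvd_left _ _) (by exact_mod_cast dvd2)
      exact_mod_cast this
  · intro hgcd
    obtain ⟨w, c, hwu, hdvd⟩ := exists_conjugator n hn u a b ha hb han hgcd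
    set v : (ZMod n)ˣ := hwu.unit with hv
    have hvw : ((v : (ZMod n)ˣ) : ZMod n) = ((w : ℤ) : ZMod n) := IsUnit.unit_spec hwu
    set cg : ZMod n := ((-c : ℤ) : ZMod n) with hcg
    refine ⟨affineEquiv v cg, ⟨v, cg, affineEquiv_X v cg⟩, ?_⟩
    set g := affineEquiv v cg with hgdef
    have hg : g X = C ((v : ZMod n)) * X + C cg := affineEquiv_X v cg
    have hzero : ((w * a + c * (u - 1) - b : ℤ) : ZMod n) = 0 :=
      (ZMod.intCast_zmod_eq_zero_iff_dvd _ n).mpr hdvd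
    push_cast at hzero
    have hcc : ((u:ZMod n)) * cg + b = (v : ZMod n) * a + cg := by
      rw [hvw, hcg]
      push_cast
      linear_combination -hzero
    have hmul : g * β = α * g := by
      refine algEquiv_ext ?_
      rw [AlgEquiv.mul_apply, AlgEquiv.mul_apply, hβ, hg, map_add, map_mul,
        algEquiv_C, algEquiv_C, hg, map_add, map_mul, algEquiv_C, algEquiv_C, hα]
      have h3 : C ((u:ZMod n)) * C cg + C ((b:ℕ) : ZMod n) =
          C ((v : ZMod n)) * C ((a:ℕ) : ZMod n) + C cg := by
        rw [← C_mul, ← C_mul, ← C_add, ← C_add, hcc]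
      linear_combination h3
    rw [mul_assoc, ← hmul, inv_mul_cancel_left]
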